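/- arXiv:2604.21831 — 3 statements merged into one kernel-verified Lean document; each statement's English description precedes it below -/
import Mathlib

section
/- Let A be a finite algebra and α a congruence of A. Then every language in nuP_{A/α} is also in nuP_A; that is, polynomial-size circuit families over the quotient algebra A/α recognize a subclass of the languages recognized over A. -/
/-- A (finitary) signature: a set of operation symbols with arities. -/
structure Sig where
  ops : Type
  arity : ops → ℕ

/-- An algebra for a signature: a carrier set with an interpretation of each symbol. -/
structure AlgStr (S : Sig) where
  carrier : Type
  interp : (o : S.ops) → (Fin (S.arity o) → carrier) → carrier

/-- One instruction of a straight-line circuit over an algebra with carrier `A`: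
an input variable, a constant from `A`, or a gate applying a basic operation
to values of earlier instructions (referenced by their position). -/
inductive Instr (S : Sig) (A : Type) (n : ℕ) : Type
  | input : Fin n → Instr S A n
  | const : A → Instr S A n
  | gate : (o : S.ops) → (Fin (S.arity o) → ℕ) → Instr S A n

/-- A circuit over a signature with carrier `A` and `n` inputs: a straight-line program. -/
abbrev Circ (S : Sig) (A : Type) (n : ℕ) := List (Instr S A n)

/-- Value of a single instruction, given the input tuple `x`, a default value `dflt`
(used for out-of-range references) and the list `v` of previously computed values. -/
def evalInstr {S : Sig} (A : AlgStr S) {n : ℕ} (x : Fin n → A.carrier)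
    (dflt : A.carrier) (v : List A.carrier) : Instr S A.carrier n → A.carrier
  | .input i => x i
  | .const a => a
  | .gate o args => A.interp o (fun j => v.getD (args j) dflt)

/-- Evaluate a circuit on an input tuple; the output is the value of the last gate. -/
def evalCirc {S : Sig} (A : AlgStr S) {n : ℕ} (dflt : A.carrier)
    (c : Circ S A.carrier n) (x : Fin n → A.carrier) : A.carrier :=
  (c.foldl (fun v i => v ++ [evalInstr A x dflt v i]) []).getLastD dflt

/-- `f` is bounded by a polynomial. -/
def PolyBounded (f : ℕ → ℕ) : Prop := ∃ c : ℕ, ∀ n, f n ≤ c * n ^ c + c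

/-- The class of languages over `{0,1}` recognized by a polynomial-size family of
circuits over the algebra `A`, together with an encoding `ι : {0,1} → A` and an
accepting set `Acc ⊆ A`. -/
def nuP {S : Sig} (A : AlgStr S) : Set (Set (List Bool)) :=
  {L | ∃ (t : (n : ℕ) → Circ S A.carrier n) (ι : Bool → A.carrier)
        (Acc : Set A.carrier) (dflt : A.carrier),
      PolyBounded (fun n => (t n).length) ∧
      ∀ w : List Bool, w ∈ L ↔
        evalCirc A dflt (t w.length) (fun i => ι (w.get i)) ∈ Acc}

/-- The quotient algebra of `A` by a congruence (an equivalence relation compatible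
with all basic operations). -/
noncomputable def quotAlg {S : Sig} (A : AlgStr S) (r : Setoid A.carrier)
    (_hr : ∀ (o : S.ops) (x y : Fin (S.arity o) → A.carrier),
      (∀ i, r.r (x i) (y i)) → r.r (A.interp o x) (A.interp o y)) : AlgStr S where
  carrier := Quotient r
  interp := fun o x => Quotient.mk r (A.interp o (fun i => Quotient.out (x i)))

/-- Lift an instruction over the quotient to an instruction over `A` by choosing
representatives of constants. -/
noncomputable def liftInstr {S : Sig} {A : Type} {n : ℕ} (r : Setoid A) :
    Instr S (Quotient r) n → Instr S A n
  | .input i => .input i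
  | .const a => .const a.out
  | .gate o args => .gate o args

lemma getD_map_mk {A : Type} (r : Setoid A) (l : List A) (d : A) (k : ℕ) :
    (l.map (Quotient.mk r)).getD k (Quotient.mk r d) = Quotient.mk r (l.getD k d) := by
  simp [List.getD, List.getElem?_map]

lemma getLastD_map_mk {A : Type} (r : Setoid A) (l : List A) (d : A) :
    (l.map (Quotient.mk r)).getLastD (Quotient.mk r d) = Quotient.mk r (l.getLastD d) := by
  induction l generalizing d with
  | nil => rfl
  | cons a t ih => rw [List.map_cons, List.getLastD_cons, List.getLastD_cons, ih]

lemma evalInstr_lift {S : Sig} (A : AlgStr S) (r : Setoid A.carrier)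
    (hr : ∀ (o : S.ops) (x y : Fin (S.arity o) → A.carrier),
      (∀ i, r.r (x i) (y i)) → r.r (A.interp o x) (A.interp o y))
    {n : ℕ} (x : Fin n → A.carrier) (d : A.carrier) (v : List A.carrier)
    (ins : Instr S (Quotient r) n) :
    evalInstr (quotAlg A r hr) (fun i => Quotient.mk r (x i)) (Quotient.mk r d)
        (v.map (Quotient.mk r)) ins
      = Quotient.mk r (evalInstr A x d v (liftInstr r ins)) := by
  cases ins with
  | input i => rfl
  | const a => simp [evalInstr, liftInstr, Quotient.out_eq]; rfl
  | gate o args =>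
    simp only [evalInstr, liftInstr, quotAlg]
    apply Quotient.sound
    apply hr
    intro i
    rw [getD_map_mk]
    exact Quotient.mk_out _

lemma evalCirc_lift {S : Sig} (A : AlgStr S) (r : Setoid A.carrier)
    (hr : ∀ (o : S.ops) (x y : Fin (S.arity o) → A.carrier),
      (∀ i, r.r (x i) (y i)) → r.r (A.interp o x) (A.interp o y))
    {n : ℕ} (x : Fin n → A.carrier) (d : A.carrier)
    (c : Circ S (Quotient r) n) :
    evalCirc (quotAlg A r hr) (Quotient.mk r d) c (fun i => Quotient.mk r (x i))
      = Quotient.mk r (evalCirc A d (c.map (liftInstr r)) x) := by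
  unfold evalCirc
  suffices h : ∀ v : List A.carrier,
      (c.foldl (fun v i => v ++ [evalInstr (quotAlg A r hr)
          (fun i => Quotient.mk r (x i)) (Quotient.mk r d) v i]) (v.map (Quotient.mk r)))
        = ((c.map (liftInstr r)).foldl
            (fun v i => v ++ [evalInstr A x d v i]) v).map (Quotient.mk r) by
    have h0 := h []
    change List.foldl _ [] c = _ at h0
    erw [h0, getLastD_map_mk]
  induction c with
  | nil => intro v; rfl
  | cons ins t ih =>
    intro v
    erw [List.map_cons, List.foldl_cons, List.foldl_cons]
    erw [evalInstr_lift A r hr,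
      show List.map (Quotient.mk r) v ++ [Quotient.mk r (evalInstr A x d v (liftInstr r ins))]
        = List.map (Quotient.mk r) (v ++ [evalInstr A x d v (liftInstr r ins)]) by simp,
      ih]
    rfl

/-- `nuP_{A/α} ⊆ nuP_A` for any congruence `α` of a finite algebra `A`. -/
theorem nuP_quotient_subset {S : Sig} [Finite S.ops] (A : AlgStr S) [Finite A.carrier]
    (r : Setoid A.carrier)
    (hr : ∀ (o : S.ops) (x y : Fin (S.arity o) → A.carrier),
      (∀ i, r.r (x i) (y i)) → r.r (A.interp o x) (A.interp o y)) :
    nuP (quotAlg A r hr) ⊆ nuP A := by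
  rintro L ⟨t, ι, Acc, dflt, hpoly, hL⟩
  refine ⟨fun n => (t n).map (liftInstr r), fun b => (ι b).out,
    (Quotient.mk r) ⁻¹' Acc, dflt.out, ?_, ?_⟩
  · obtain ⟨c, hc⟩ := hpoly
    exact ⟨c, fun n => (List.length_map ..).trans_le (hc n)⟩
  · intro w
    rw [hL w]
    have := evalCirc_lift A r hr (n := w.length) (fun i => (ι (w.get i)).out)
      dflt.out (t w.length)
    erw [show (fun i => Quotient.mk r (ι (w.get i)).out) = (fun i => ι (w.get i)) from
      funext fun i => Quotient.out_eq _, Quotient.out_eq] at this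
    rw [this]
    rfl
end

section
/- Let A and B be finite algebras. If L is a language in nuP_{A×B}, then there exist finitely many languages L_1^A,...,L_k^A ∈ nuP_A and L_1^B,...,L_k^B ∈ nuP_B such that L = ⋃_{i=1}^k (L_i^A ∩ L_i^B). -/
/-- The direct product of two algebras over the same signature, with coordinatewise operations. -/
def prodAlg {S : Sig} (A B : AlgStr S) : AlgStr S where
  carrier := A.carrier × B.carrier
  interp := fun o x => (A.interp o (fun i => (x i).1), B.interp o (fun i => (x i).2))

-- aux
def mapInstr {S : Sig} {A A' : Type} {n : ℕ} (f : A → A') : Instr S A n → Instr S A' n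
  | .input i => .input i
  | .const a => .const (f a)
  | .gate o args => .gate o args

lemma getD_map' {α β : Type*} (f : α → β) (l : List α) (k : ℕ) (d : α) :
    (l.map f).getD k (f d) = f (l.getD k d) := by
  induction l generalizing k with
  | nil => simp [List.getD]
  | cons a l ih => cases k <;> simp [List.getD, ih]

lemma getLastD_map' {α β : Type*} (f : α → β) (l : List α) (d : α) :
    (l.map f).getLastD (f d) = f (l.getLastD d) := by
  induction l generalizing d with
  | nil => simp
  | cons a l ih => rw [List.map_cons, List.getLastD_cons, List.getLastD_cons, ih]

lemma foldl_map_gen {I J α β : Type*} (g : I → J) (p : α → β) (F : List α → I → α)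
    (G : List β → J → β) (h : ∀ v i, G (v.map p) (g i) = p (F v i)) (c : List I) :
    List.foldl (fun v i => v ++ [G v i]) [] (c.map g)
      = (List.foldl (fun v i => v ++ [F v i]) [] c).map p := by
  induction c using List.reverseRecOn with
  | nil => rfl
  | append_singleton c i ih => simp [List.foldl_append, ih, h]

lemma eval_fst {S : Sig} (A B : AlgStr S) {n : ℕ} (x : Fin n → (prodAlg A B).carrier)
    (d : (prodAlg A B).carrier) (c : Circ S (prodAlg A B).carrier n) :
    evalCirc A d.1 (c.map (mapInstr Prod.fst)) (fun i => (x i).1)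
      = (evalCirc (prodAlg A B) d c x).1 := by
  unfold evalCirc
  have key : (List.foldl (fun v i => v ++ [evalInstr A (fun i => (x i).1) d.1 v i]) []
      (c.map (mapInstr Prod.fst)))
      = (List.foldl (fun v i => v ++ [evalInstr (prodAlg A B) x d v i]) [] c).map Prod.fst := by
    refine foldl_map_gen (mapInstr Prod.fst) Prod.fst _ _ (fun v i => ?_) c
    cases i with
    | input j => rfl
    | const a => rfl
    | gate o args =>
        exact congrArg (A.interp o) (funext fun j => getD_map' Prod.fst v (args j) d)
  rw [key]; exact getLastD_map' Prod.fst _ d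

lemma eval_snd {S : Sig} (A B : AlgStr S) {n : ℕ} (x : Fin n → (prodAlg A B).carrier)
    (d : (prodAlg A B).carrier) (c : Circ S (prodAlg A B).carrier n) :
    evalCirc B d.2 (c.map (mapInstr Prod.snd)) (fun i => (x i).2)
      = (evalCirc (prodAlg A B) d c x).2 := by
  unfold evalCirc
  have key : (List.foldl (fun v i => v ++ [evalInstr B (fun i => (x i).2) d.2 v i]) []
      (c.map (mapInstr Prod.snd)))
      = (List.foldl (fun v i => v ++ [evalInstr (prodAlg A B) x d v i]) [] c).map Prod.snd := by
    refine foldl_map_gen (mapInstr Prod.snd) Prod.snd _ _ (fun v i => ?_) c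
    cases i with
    | input j => rfl
    | const a => rfl
    | gate o args =>
        exact congrArg (B.interp o) (funext fun j => getD_map' Prod.snd v (args j) d)
  rw [key]; exact getLastD_map' Prod.snd _ d

theorem nuP_prod_decomposition_aux {S : Sig} (A B : AlgStr S)
    [Finite A.carrier] [Finite B.carrier]
    (L : Set (List Bool)) (hL : L ∈ nuP (prodAlg A B)) :
    ∃ (k : ℕ) (LA : Fin k → Set (List Bool)) (LB : Fin k → Set (List Bool)),
      (∀ i, LA i ∈ nuP A) ∧ (∀ i, LB i ∈ nuP B) ∧
      L = ⋃ i, LA i ∩ LB i := by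
  obtain ⟨t, ι, Acc, dflt, hpoly, hspec⟩ := hL
  haveI : Finite ((prodAlg A B).carrier) := inferInstanceAs (Finite (A.carrier × B.carrier))
  haveI := (Set.toFinite Acc).fintype
  set k := Fintype.card Acc with hk
  set e : Fin k ≃ Acc := (Fintype.equivFin Acc).symm with he
  refine ⟨k,
    fun i => {w | evalCirc A dflt.1 ((t w.length).map (mapInstr Prod.fst))
      (fun j => (ι (w.get j)).1) = ((e i : (prodAlg A B).carrier)).1},
    fun i => {w | evalCirc B dflt.2 ((t w.length).map (mapInstr Prod.snd))
      (fun j => (ι (w.get j)).2) = ((e i : (prodAlg A B).carrier)).2},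
    ?_, ?_, ?_⟩
  · intro i
    refine ⟨fun n => (t n).map (mapInstr Prod.fst), fun b => (ι b).1,
      {((e i : (prodAlg A B).carrier)).1}, dflt.1, ?_, ?_⟩
    · obtain ⟨c, hc⟩ := hpoly
      exact ⟨c, fun n => le_trans (le_of_eq (List.length_map _)) (hc n)⟩
    · intro w; simp [Set.mem_singleton_iff, Set.mem_setOf_eq]
  · intro i
    refine ⟨fun n => (t n).map (mapInstr Prod.snd), fun b => (ι b).2,
      {((e i : (prodAlg A B).carrier)).2}, dflt.2, ?_, ?_⟩
    · obtain ⟨c, hc⟩ := hpoly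
      exact ⟨c, fun n => le_trans (le_of_eq (List.length_map _)) (hc n)⟩
    · intro w; simp [Set.mem_singleton_iff, Set.mem_setOf_eq]
  · ext w
    rw [hspec w]
    simp only [Set.mem_iUnion, Set.mem_inter_iff, Set.mem_setOf_eq,
      eval_fst A B, eval_snd A B]
    constructor
    · intro hv
      refine ⟨e.symm ⟨_, hv⟩, ?_, ?_⟩ <;> simp
    · rintro ⟨i, h1, h2⟩
      have : evalCirc (prodAlg A B) dflt (t w.length) (fun j => ι (w.get j))
          = (e i : (prodAlg A B).carrier) := Prod.ext h1 h2
      rw [this]; exact (e i).2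


/-- every language in `nuP_{A×B}` is a finite union of intersections
`L_i^A ∩ L_i^B` with `L_i^A ∈ nuP_A` and `L_i^B ∈ nuP_B`. -/
theorem nuP_prod_decomposition {S : Sig} [Finite S.ops] (A B : AlgStr S)
    [Finite A.carrier] [Finite B.carrier]
    (L : Set (List Bool)) (hL : L ∈ nuP (prodAlg A B)) :
    ∃ (k : ℕ) (LA : Fin k → Set (List Bool)) (LB : Fin k → Set (List Bool)),
      (∀ i, LA i ∈ nuP A) ∧ (∀ i, LB i ∈ nuP B) ∧
      L = ⋃ i, LA i ∩ LB i :=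
  nuP_prod_decomposition_aux A B L hL
end

section
/- Let F be a field and let w be a polynomial over F in n variables built by an ABP-process of length at most l (starting from the constant 1, and at each step either multiplying an existing polynomial by a variable or a constant, or adding several existing polynomials). Let A_1,...,A_n be affine forms in the same n variables. Then w(A_1,...,A_n) is built by an ABP-process of length O(n·l); moreover, if each A_i depends on at most one variable, the length is O(l). -/
/-- One step of an ABP-process over coefficients `F` in `n` variables: multiply a
previously constructed polynomial (referenced by its position) by a single variable
or a single constant, or add a finite list of previously constructed polynomials. -/
inductive ABPStep (F : Type) (n : ℕ) : Type
  | mulVar : ℕ → Fin n → ABPStep F n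
  | mulConst : ℕ → F → ABPStep F n
  | add : List ℕ → ABPStep F n

/-- The cost of a step: a multiplication counts 1, adding `m` polynomials counts `m`. -/
def ABPStep.cost {F : Type} {n : ℕ} : ABPStep F n → ℕ
  | .mulVar _ _ => 1
  | .mulConst _ _ => 1
  | .add js => js.length

/-- The polynomial produced by one step, given the list `v` of previously
constructed polynomials (out-of-range references default to `0`). -/
noncomputable def ABPStep.run {F : Type} [CommSemiring F] {n : ℕ}
    (v : List (MvPolynomial (Fin n) F)) : ABPStep F n → MvPolynomial (Fin n) F
  | .mulVar j i => v.getD j 0 * MvPolynomial.X i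
  | .mulConst j c => v.getD j 0 * MvPolynomial.C c
  | .add js => (js.map (fun j => v.getD j 0)).sum

/-- Run an ABP-process: starting from the single polynomial `1`, successively append
the polynomial produced by each step. -/
noncomputable def ABPRun {F : Type} [CommSemiring F] {n : ℕ} (steps : List (ABPStep F n)) :
    List (MvPolynomial (Fin n) F) :=
  steps.foldl (fun v s => v ++ [ABPStep.run v s]) [1]

/-- `ABPSize w l`: the polynomial `w` is produced by some ABP-process of total cost
(equivalently, of ABP size) at most `l`. -/
def ABPSize {F : Type} [CommSemiring F] {n : ℕ}
    (w : MvPolynomial (Fin n) F) (l : ℕ) : Prop :=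
  ∃ steps : List (ABPStep F n), (steps.map ABPStep.cost).sum ≤ l ∧ w ∈ ABPRun steps

namespace ABPAux

variable {F : Type} [CommSemiring F] {n : ℕ}

noncomputable def fold (v : List (MvPolynomial (Fin n) F)) (g : List (ABPStep F n)) :
    List (MvPolynomial (Fin n) F) :=
  g.foldl (fun v s => v ++ [ABPStep.run v s]) v

def cost (g : List (ABPStep F n)) : ℕ := (g.map ABPStep.cost).sum

lemma fold_append (v : List (MvPolynomial (Fin n) F)) (g1 g2 : List (ABPStep F n)) :
    fold v (g1 ++ g2) = fold (fold v g1) g2 := List.foldl_append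

lemma cost_append (g1 g2 : List (ABPStep F n)) :
    cost (g1 ++ g2) = cost g1 + cost g2 := by simp [cost]

lemma mem_fold {v : List (MvPolynomial (Fin n) F)} (g : List (ABPStep F n))
    {p : MvPolynomial (Fin n) F} (hp : p ∈ v) : p ∈ fold v g := by
  induction g generalizing v with
  | nil => exact hp
  | cons s g ih => exact ih (List.mem_append_left _ hp)

def CanReach (v : List (MvPolynomial (Fin n) F)) (q : MvPolynomial (Fin n) F) (k : ℕ) : Prop :=
  ∃ g : List (ABPStep F n), cost g ≤ k ∧ q ∈ fold v g

lemma canReach_mono {v : List (MvPolynomial (Fin n) F)} {q : MvPolynomial (Fin n) F} {k k' : ℕ}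
    (h : CanReach v q k) (hk : k ≤ k') : CanReach v q k' := by
  obtain ⟨g, h1, h2⟩ := h; exact ⟨g, h1.trans hk, h2⟩

lemma canReach_of_mem {v : List (MvPolynomial (Fin n) F)} {q : MvPolynomial (Fin n) F}
    (h : q ∈ v) : CanReach v q 0 := ⟨[], le_refl 0, h⟩

lemma canReach_seq {v : List (MvPolynomial (Fin n) F)} {q r : MvPolynomial (Fin n) F} {k m : ℕ}
    (h1 : CanReach v q k)
    (h2 : ∀ v', q ∈ v' → (∀ x ∈ v, x ∈ v') → CanReach v' r m) :
    CanReach v r (k + m) := by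
  obtain ⟨g1, hc1, hq⟩ := h1
  obtain ⟨g2, hc2, hr⟩ := h2 (fold v g1) hq (fun x hx => mem_fold _ hx)
  refine ⟨g1 ++ g2, ?_, ?_⟩
  · rw [cost_append]; omega
  · rw [fold_append]; exact hr

lemma exists_getD {v : List (MvPolynomial (Fin n) F)} {p : MvPolynomial (Fin n) F} (h : p ∈ v) :
    ∃ j, v.getD j 0 = p := by
  obtain ⟨i, hi, rfl⟩ := List.getElem_of_mem h
  exact ⟨i, List.getD_eq_getElem _ _ hi⟩

lemma canReach_mulX {v : List (MvPolynomial (Fin n) F)} {p : MvPolynomial (Fin n) F}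
    (h : p ∈ v) (i : Fin n) : CanReach v (p * MvPolynomial.X i) 1 := by
  obtain ⟨j, hj⟩ := exists_getD h
  refine ⟨[.mulVar j i], by simp [cost, ABPStep.cost], ?_⟩
  show p * MvPolynomial.X i ∈ v ++ [v.getD j 0 * MvPolynomial.X i]
  rw [hj]
  exact List.mem_append_right _ (List.mem_singleton_self _)

lemma canReach_mulC {v : List (MvPolynomial (Fin n) F)} {p : MvPolynomial (Fin n) F}
    (h : p ∈ v) (c : F) : CanReach v (p * MvPolynomial.C c) 1 := by
  obtain ⟨j, hj⟩ := exists_getD h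
  refine ⟨[.mulConst j c], by simp [cost, ABPStep.cost], ?_⟩
  show p * MvPolynomial.C c ∈ v ++ [v.getD j 0 * MvPolynomial.C c]
  rw [hj]
  exact List.mem_append_right _ (List.mem_singleton_self _)

lemma canReach_zero (v : List (MvPolynomial (Fin n) F)) : CanReach v 0 0 :=
  ⟨[.add []], by simp [cost, ABPStep.cost], by simp [fold, ABPStep.run]⟩

lemma canReach_sum {v : List (MvPolynomial (Fin n) F)} (ps : List (MvPolynomial (Fin n) F))
    (h : ∀ p ∈ ps, p ∈ v) : CanReach v ps.sum ps.length := by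
  have key : ∃ js : List ℕ, js.length = ps.length ∧ js.map (fun j => v.getD j 0) = ps := by
    induction ps with
    | nil => exact ⟨[], rfl, rfl⟩
    | cons p ps ih =>
      obtain ⟨js, h1, h2⟩ := ih (fun q hq => h q (List.mem_cons_of_mem _ hq))
      obtain ⟨j, hj⟩ := exists_getD (h p List.mem_cons_self)
      exact ⟨j :: js, by simp [h1], by rw [List.map_cons, hj, h2]⟩
  obtain ⟨js, h1, h2⟩ := key
  refine ⟨[.add js], by simp [cost, ABPStep.cost, h1], ?_⟩
  show ps.sum ∈ v ++ [(js.map (fun j => v.getD j 0)).sum]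
  rw [h2]
  exact List.mem_append_right _ (List.mem_singleton_self _)

lemma canReachAll (k : ℕ) (qs : List (MvPolynomial (Fin n) F))
    (v : List (MvPolynomial (Fin n) F))
    (h : ∀ q ∈ qs, ∀ v' : List (MvPolynomial (Fin n) F),
      (∀ x ∈ v, x ∈ v') → CanReach v' q k) :
    ∃ g : List (ABPStep F n), cost g ≤ k * qs.length ∧ ∀ q ∈ qs, q ∈ fold v g := by
  induction qs generalizing v with
  | nil => exact ⟨[], by simp [cost], by simp⟩
  | cons q qs ih =>
    obtain ⟨g1, hc1, hq⟩ := h q List.mem_cons_self v (fun x hx => hx)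
    obtain ⟨g2, hc2, hqs⟩ := ih (fold v g1)
      (fun q' hq' v' hv' => h q' (List.mem_cons_of_mem _ hq') v'
        (fun x hx => hv' x (mem_fold _ hx)))
    refine ⟨g1 ++ g2, ?_, ?_⟩
    · rw [cost_append]; simp only [List.length_cons, Nat.mul_succ]; omega
    · rw [fold_append]
      intro q' hq'
      rcases List.mem_cons.mp hq' with rfl | hq'
      · exact mem_fold _ hq
      · exact hqs q' hq'

/-- Combine: reach each of a list of polynomials, then add them. -/
lemma canReach_comb (k : ℕ) (qs : List (MvPolynomial (Fin n) F))
    (v : List (MvPolynomial (Fin n) F))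
    (h : ∀ q ∈ qs, ∀ v' : List (MvPolynomial (Fin n) F),
      (∀ x ∈ v, x ∈ v') → CanReach v' q k) :
    CanReach v qs.sum (k * qs.length + qs.length) := by
  obtain ⟨g1, hc1, hall⟩ := canReachAll k qs v h
  obtain ⟨g2, hc2, hmem⟩ := canReach_sum qs hall
  refine ⟨g1 ++ g2, ?_, ?_⟩
  · rw [cost_append]; omega
  · rw [fold_append]; exact hmem

lemma canReach_mul_affine {v : List (MvPolynomial (Fin n) F)} {p : MvPolynomial (Fin n) F}
    (h : p ∈ v) (α : Fin n → F) (c : F) :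
    CanReach v
      (p * ((∑ j : Fin n, MvPolynomial.C (α j) * MvPolynomial.X j) + MvPolynomial.C c))
      (3 * (n + 1)) := by
  set qs : List (MvPolynomial (Fin n) F) :=
    ((List.finRange n).map (fun j => p * (MvPolynomial.C (α j) * MvPolynomial.X j))) ++
      [p * MvPolynomial.C c] with hqs
  have hlen : qs.length = n + 1 := by simp [hqs]
  have hsum : qs.sum =
      p * ((∑ j : Fin n, MvPolynomial.C (α j) * MvPolynomial.X j) + MvPolynomial.C c) := by
    rw [hqs, List.sum_append, mul_add, Finset.mul_sum, Fin.sum_univ_def]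
    simp
  have hstep : ∀ q ∈ qs, ∀ v' : List (MvPolynomial (Fin n) F),
      (∀ x ∈ v, x ∈ v') → CanReach v' q 2 := by
    intro q hq v' hv'
    have hp' : p ∈ v' := hv' p h
    rw [hqs] at hq
    rcases List.mem_append.mp hq with hq | hq
    · obtain ⟨j, _, rfl⟩ := List.mem_map.mp hq
      have he : p * (MvPolynomial.C (α j) * MvPolynomial.X j)
          = p * MvPolynomial.X j * MvPolynomial.C (α j) := by ring
      rw [he]
      exact canReach_seq (canReach_mulX hp' j)
        (fun v'' hq'' _ => canReach_mulC hq'' _)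
    · simp only [List.mem_singleton] at hq
      subst hq
      exact canReach_mono (canReach_mulC hp' c) (by omega)
  have := canReach_comb 2 qs v hstep
  rw [hsum, hlen] at this
  exact canReach_mono this (by omega)

lemma canReach_mul_affine_single {v : List (MvPolynomial (Fin n) F)}
    {p : MvPolynomial (Fin n) F} (h : p ∈ v) (α : Fin n → F) (c : F) (j0 : Fin n)
    (hα : ∀ j' : Fin n, j' ≠ j0 → α j' = 0) :
    CanReach v
      (p * ((∑ j : Fin n, MvPolynomial.C (α j) * MvPolynomial.X j) + MvPolynomial.C c))
      6 := by
  have hs : (∑ j : Fin n, MvPolynomial.C (α j) * MvPolynomial.X j)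
      = MvPolynomial.C (α j0) * MvPolynomial.X j0 :=
    Finset.sum_eq_single j0 (fun b _ hb => by rw [hα b hb, map_zero, zero_mul])
      (fun hmem => absurd (Finset.mem_univ _) hmem)
  rw [hs]
  set qs : List (MvPolynomial (Fin n) F) :=
    [p * (MvPolynomial.C (α j0) * MvPolynomial.X j0), p * MvPolynomial.C c] with hqs
  have hsum : qs.sum = p * (MvPolynomial.C (α j0) * MvPolynomial.X j0 + MvPolynomial.C c) := by
    simp [hqs, mul_add]
  have hstep : ∀ q ∈ qs, ∀ v' : List (MvPolynomial (Fin n) F),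
      (∀ x ∈ v, x ∈ v') → CanReach v' q 2 := by
    intro q hq v' hv'
    have hp' : p ∈ v' := hv' p h
    rw [hqs] at hq
    rcases List.mem_cons.mp hq with rfl | hq
    · have he : p * (MvPolynomial.C (α j0) * MvPolynomial.X j0)
          = p * MvPolynomial.X j0 * MvPolynomial.C (α j0) := by ring
      rw [he]
      exact canReach_seq (canReach_mulX hp' j0)
        (fun v'' hq'' _ => canReach_mulC hq'' _)
    · simp only [List.mem_singleton] at hq
      subst hq
      exact canReach_mono (canReach_mulC hp' c) (by omega)
  have := canReach_comb 2 qs v hstep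
  rw [hsum] at this
  exact canReach_mono this (by norm_num [hqs])

end ABPAux

namespace ABPAux

lemma main_sim {F : Type} [CommSemiring F] {n : ℕ} (K : ℕ) (hK : 1 ≤ K)
    (A : Fin n → MvPolynomial (Fin n) F)
    (hA : ∀ (i : Fin n) (v' : List (MvPolynomial (Fin n) F)) (p : MvPolynomial (Fin n) F),
      p ∈ v' → CanReach v' (p * A i) K)
    (steps : List (ABPStep F n)) :
    ∃ g : List (ABPStep F n), cost g ≤ K * cost steps ∧
      ∀ p ∈ ABPRun steps, (MvPolynomial.bind₁ A) p ∈ fold [1] g := by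
  induction steps using List.reverseRecOn with
  | nil =>
    refine ⟨[], by simp [cost], ?_⟩
    intro p hp
    simp only [ABPRun, List.foldl_nil, List.mem_singleton] at hp
    subst hp
    simp [fold]
  | append_singleton steps s ih =>
    obtain ⟨g, hc, hmem⟩ := ih
    have hrun : ABPRun (steps ++ [s]) = ABPRun steps ++ [ABPStep.run (ABPRun steps) s] := by
      simp [ABPRun, List.foldl_append]
    set v := ABPRun steps with hv
    set V := fold ([1] : List (MvPolynomial (Fin n) F)) g with hV
    have key : CanReach V ((MvPolynomial.bind₁ A) (ABPStep.run v s)) (K * ABPStep.cost s) := by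
      cases s with
      | mulVar j i =>
        show CanReach V ((MvPolynomial.bind₁ A) (v.getD j 0 * MvPolynomial.X i)) (K * 1)
        rw [map_mul, MvPolynomial.bind₁_X_right, Nat.mul_one]
        by_cases hj : j < v.length
        · have hpv : v.getD j 0 ∈ v := by
            rw [List.getD_eq_getElem _ _ hj]
            exact List.getElem_mem hj
          exact hA i V _ (hmem _ hpv)
        · rw [List.getD_eq_default _ _ (le_of_not_gt hj), map_zero, zero_mul]
          exact canReach_mono (canReach_zero V) (by omega)
      | mulConst j c =>
        show CanReach V ((MvPolynomial.bind₁ A) (v.getD j 0 * MvPolynomial.C c)) (K * 1)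
        rw [map_mul, MvPolynomial.bind₁_C_right, Nat.mul_one]
        by_cases hj : j < v.length
        · have hpv : v.getD j 0 ∈ v := by
            rw [List.getD_eq_getElem _ _ hj]
            exact List.getElem_mem hj
          exact canReach_mono (canReach_mulC (hmem _ hpv) c) hK
        · rw [List.getD_eq_default _ _ (le_of_not_gt hj), map_zero, zero_mul]
          exact canReach_mono (canReach_zero V) (by omega)
      | add js =>
        show CanReach V
          ((MvPolynomial.bind₁ A) ((js.map (fun j => v.getD j 0)).sum)) (K * js.length)
        rw [map_list_sum, List.map_map]
        set ps := js.map ((MvPolynomial.bind₁ A) ∘ (fun j => v.getD j 0)) with hps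
        obtain ⟨g0, hc0, hmem0⟩ := canReach_zero V
        have hall : ∀ p ∈ ps, p ∈ fold V g0 := by
          intro p hp
          rw [hps] at hp
          obtain ⟨j, hjm, rfl⟩ := List.mem_map.mp hp
          by_cases hjl : j < v.length
          · have hpv : v.getD j 0 ∈ v := by
              rw [List.getD_eq_getElem _ _ hjl]
              exact List.getElem_mem hjl
            exact mem_fold g0 (hmem _ hpv)
          · show (MvPolynomial.bind₁ A) (v.getD j 0) ∈ fold V g0
            rw [List.getD_eq_default _ _ (le_of_not_gt hjl), map_zero]
            exact hmem0
        obtain ⟨g2, hc2, hsum⟩ := canReach_sum ps hall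
        refine ⟨g0 ++ g2, ?_, ?_⟩
        · rw [cost_append]
          have hl : ps.length = js.length := by simp [hps]
          have h3 : js.length ≤ K * js.length := Nat.le_mul_of_pos_left js.length hK
          omega
        · rw [fold_append]; exact hsum
    obtain ⟨g2, hc2, hnew⟩ := key
    refine ⟨g ++ g2, ?_, ?_⟩
    · rw [cost_append]
      have he : cost (steps ++ [s]) = cost steps + ABPStep.cost s := by simp [cost]
      rw [he, Nat.mul_add]
      omega
    · rw [hrun]
      intro p hp
      rcases List.mem_append.mp hp with hp | hp
      · rw [fold_append]
        exact mem_fold g2 (hmem p hp)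
      · rw [List.mem_singleton] at hp
        subst hp
        rw [fold_append]
        exact hnew

end ABPAux


/-- substituting affine forms `A_i = Σ_j α_{ij} x_j + c_i` into a
polynomial `w` of ABP complexity `l` yields a polynomial of ABP complexity `O(n·l)`;
if moreover each affine form depends on at most one variable, of ABP complexity `O(l)`. -/
theorem abp_affine_substitution :
    ∃ C : ℕ, ∀ (F : Type) [Field F] (n l : ℕ)
      (w : MvPolynomial (Fin n) F) (α : Fin n → Fin n → F) (c : Fin n → F),
      ABPSize w l →
      (ABPSize (MvPolynomial.bind₁
          (fun i => (∑ j : Fin n, MvPolynomial.C (α i j) * MvPolynomial.X j)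
            + MvPolynomial.C (c i)) w)
        (C * (n + 1) * (l + 1)) ∧
       ((∀ i, ∃ j : Fin n, ∀ j' : Fin n, j' ≠ j → α i j' = 0) →
        ABPSize (MvPolynomial.bind₁
          (fun i => (∑ j : Fin n, MvPolynomial.C (α i j) * MvPolynomial.X j)
            + MvPolynomial.C (c i)) w)
        (C * (l + 1)))) := by
  refine ⟨6, ?_⟩
  intro F _ n l w α c hw
  obtain ⟨steps, hcost, hwmem⟩ := hw
  constructor
  · obtain ⟨g, hg, hmem⟩ := ABPAux.main_sim (3 * (n + 1)) (by omega)
      (fun i => (∑ j : Fin n, MvPolynomial.C (α i j) * MvPolynomial.X j)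
        + MvPolynomial.C (c i))
      (fun i v' p hp => ABPAux.canReach_mul_affine hp (α i) (c i)) steps
    refine ⟨g, ?_, hmem w hwmem⟩
    have h1 : ABPAux.cost g ≤ 3 * (n + 1) * l :=
      hg.trans (Nat.mul_le_mul_left _ hcost)
    have h2 : 3 * (n + 1) * l ≤ 6 * (n + 1) * (l + 1) :=
      Nat.mul_le_mul (by omega) (by omega)
    exact le_trans h1 h2
  · intro hsingle
    choose j0 hj0 using hsingle
    obtain ⟨g, hg, hmem⟩ := ABPAux.main_sim 6 (by omega)
      (fun i => (∑ j : Fin n, MvPolynomial.C (α i j) * MvPolynomial.X j)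
        + MvPolynomial.C (c i))
      (fun i v' p hp => ABPAux.canReach_mul_affine_single hp (α i) (c i) (j0 i) (hj0 i)) steps
    refine ⟨g, ?_, hmem w hwmem⟩
    have h1 : ABPAux.cost g ≤ 6 * l := hg.trans (Nat.mul_le_mul_left _ hcost)
    have : ABPAux.cost g = (g.map ABPStep.cost).sum := rfl
    omega
end
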